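/- Fix p ≥ 1 and a unit vector v₀ ∈ ℝ^p. For r ∈ ℝ let φ_r : ℝ^p → ℂ be φ_r(X) = ∫_{O(p)} exp(i·r·⟪v₀, k·X⟫) dk. If r, r' ≥ 0 and φ_r(X) = φ_{r'}(X) for all X ∈ ℝ^p, then r = r'; i.e., the parametrization of the 'type 2' bounded O(p)-spherical functions by r ∈ [0,∞) is injective. -/

import Mathlib

open Matrix MeasureTheory

/-- Borel measurable structure on the orthogonal group `O(p)`. -/
noncomputable instance (p : ℕ) : MeasurableSpace (Matrix.orthogonalGroup (Fin p) ℝ) :=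
  borel _

lemma gauss_key {K : Type*} [TopologicalSpace K] [MeasurableSpace K] [BorelSpace K]
    [SecondCountableTopology K]
    (μ : Measure K) [IsProbabilityMeasure μ] (c : K → ℝ) (hc : Continuous c) (ρ ρ' : ℝ)
    (hh : ∀ s : ℝ, (∫ k, Complex.exp (Complex.I * (ρ : ℂ) * ((s * c k : ℝ) : ℂ)) ∂μ)
        = ∫ k, Complex.exp (Complex.I * (ρ' : ℂ) * ((s * c k : ℝ) : ℂ)) ∂μ) :
    (∫ k, Real.exp (-(ρ * c k) ^ 2 / 2) ∂μ) = ∫ k, Real.exp (-(ρ' * c k) ^ 2 / 2) ∂μ := by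
  have hb : (0:ℝ) < (1/2 : ℂ).re := by norm_num
  have main : ∀ τ : ℝ,
      (∫ s : ℝ, (∫ k, Complex.exp (Complex.I * (τ : ℂ) * ((s * c k : ℝ) : ℂ)) ∂μ) *
          Complex.exp (-(1/2 : ℂ) * (s:ℂ) ^ 2))
        = ((Real.pi : ℂ) / (1/2 : ℂ)) ^ (1/2 : ℂ) *
          ∫ k, Complex.exp (-((τ * c k : ℝ) : ℂ) ^ 2 / (4 * (1/2 : ℂ))) ∂μ := by
    intro τ
    have hcont : Continuous (fun z : ℝ × K =>
        Complex.exp (Complex.I * (τ : ℂ) * ((z.1 * c z.2 : ℝ) : ℂ)) *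
          Complex.exp (-(1/2 : ℂ) * (z.1:ℂ) ^ 2)) := by fun_prop
    have hint : Integrable (Function.uncurry fun (s : ℝ) (k : K) =>
        Complex.exp (Complex.I * (τ : ℂ) * ((s * c k : ℝ) : ℂ)) *
          Complex.exp (-(1/2 : ℂ) * (s:ℂ) ^ 2)) ((volume : Measure ℝ).prod μ) := by
      have hbd : Integrable (fun z : ℝ × K => Real.exp (-(1/2:ℝ) * z.1 ^ 2) * 1)
          ((volume : Measure ℝ).prod μ) :=
        (integrable_exp_neg_mul_sq (by norm_num : (0:ℝ) < 1/2)).mul_prod (integrable_const 1)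
      refine hbd.mono' hcont.aestronglyMeasurable ?_
      refine Filter.Eventually.of_forall fun z => ?_
      obtain ⟨s, k⟩ := z
      have h2 : (-(1/2 : ℂ) * (s:ℂ) ^ 2) = ((-(1/2) * s ^ 2 : ℝ) : ℂ) := by push_cast; ring
      simp only [Function.uncurry_apply_pair, norm_mul, h2,
        Complex.norm_exp]
      have h1 : (Complex.I * (τ : ℂ) * ((s * c k : ℝ) : ℂ)).re = 0 := by simp
      rw [h1, Complex.ofReal_re, Real.exp_zero, one_mul, mul_one]
    calc (∫ s : ℝ, (∫ k, Complex.exp (Complex.I * (τ : ℂ) * ((s * c k : ℝ) : ℂ)) ∂μ) *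
          Complex.exp (-(1/2 : ℂ) * (s:ℂ) ^ 2))
        = ∫ s : ℝ, ∫ k, Complex.exp (Complex.I * (τ : ℂ) * ((s * c k : ℝ) : ℂ)) *
            Complex.exp (-(1/2 : ℂ) * (s:ℂ) ^ 2) ∂μ := by
          congr 1; ext s; rw [← integral_mul_const]
      _ = ∫ k, ∫ s : ℝ, Complex.exp (Complex.I * (τ : ℂ) * ((s * c k : ℝ) : ℂ)) *
            Complex.exp (-(1/2 : ℂ) * (s:ℂ) ^ 2) ∂(volume : Measure ℝ) ∂μ :=
          integral_integral_swap hint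
      _ = ∫ k, ((Real.pi : ℂ) / (1/2 : ℂ)) ^ (1/2 : ℂ) *
            Complex.exp (-((τ * c k : ℝ) : ℂ) ^ 2 / (4 * (1/2 : ℂ))) ∂μ := by
          congr 1; ext k
          have hfg := fourierIntegral_gaussian hb ((τ * c k : ℝ) : ℂ)
          rw [← hfg]
          congr 1; ext s
          push_cast
          ring_nf
      _ = _ := integral_const_mul _ _
  have hC : ((Real.pi : ℂ) / (1/2 : ℂ)) ^ (1/2 : ℂ) ≠ 0 := by
    rw [Ne, Complex.cpow_eq_zero_iff]
    push_neg
    intro hzero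
    exact absurd hzero (div_ne_zero (by exact_mod_cast Real.pi_ne_zero) (by norm_num))
  have heq : (∫ k, Complex.exp (-((ρ * c k : ℝ) : ℂ) ^ 2 / (4 * (1/2 : ℂ))) ∂μ)
      = ∫ k, Complex.exp (-((ρ' * c k : ℝ) : ℂ) ^ 2 / (4 * (1/2 : ℂ))) ∂μ := by
    apply mul_left_cancel₀ hC
    rw [← main ρ, ← main ρ']
    refine integral_congr_ae (Filter.Eventually.of_forall fun s => ?_)
    dsimp only
    rw [hh s]
  have hre : ∀ (τ : ℝ) (k : K), Complex.exp (-((τ * c k : ℝ) : ℂ) ^ 2 / (4 * (1/2 : ℂ)))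
      = ((Real.exp (-(τ * c k) ^ 2 / 2) : ℝ) : ℂ) := by
    intro τ k
    rw [Complex.ofReal_exp]
    congr 1
    push_cast
    ring
  simp only [hre] at heq
  have e1 : ∫ k, ((Real.exp (-(ρ * c k) ^ 2 / 2) : ℝ) : ℂ) ∂μ
      = ((∫ k, Real.exp (-(ρ * c k) ^ 2 / 2) ∂μ : ℝ) : ℂ) :=
    Complex.ofRealLI.integral_comp_comm _
  have e2 : ∫ k, ((Real.exp (-(ρ' * c k) ^ 2 / 2) : ℝ) : ℂ) ∂μ
      = ((∫ k, Real.exp (-(ρ' * c k) ^ 2 / 2) ∂μ : ℝ) : ℂ) :=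
    Complex.ofRealLI.integral_comp_comm _
  rw [e1, e2] at heq
  exact_mod_cast heq

instance (p : ℕ) : BorelSpace (Matrix.orthogonalGroup (Fin p) ℝ) := ⟨rfl⟩

instance matSecondCountable (p : ℕ) : SecondCountableTopology (Matrix (Fin p) (Fin p) ℝ) :=
  (inferInstance : SecondCountableTopology (Fin p → Fin p → ℝ))

instance ogSecondCountable (p : ℕ) :
    SecondCountableTopology (Matrix.orthogonalGroup (Fin p) ℝ) :=
  TopologicalSpace.Subtype.secondCountableTopology _


lemma aux_contra (p : ℕ) (v₀ : Fin p → ℝ) (hv₀ : v₀ ⬝ᵥ v₀ = 1)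
    (μK : Measure (Matrix.orthogonalGroup (Fin p) ℝ)) [IsProbabilityMeasure μK]
    (r r' : ℝ) (hr : 0 ≤ r) (hlt : r < r')
    (h : ∀ X : Fin p → ℝ,
      (∫ k : Matrix.orthogonalGroup (Fin p) ℝ,
        Complex.exp (Complex.I * (r : ℂ) *
          ((v₀ ⬝ᵥ (k : Matrix (Fin p) (Fin p) ℝ).mulVec X : ℝ) : ℂ)) ∂μK) =
      (∫ k : Matrix.orthogonalGroup (Fin p) ℝ,
        Complex.exp (Complex.I * (r' : ℂ) *
          ((v₀ ⬝ᵥ (k : Matrix (Fin p) (Fin p) ℝ).mulVec X : ℝ) : ℂ)) ∂μK)) :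
    False := by
  set K := Matrix.orthogonalGroup (Fin p) ℝ
  -- for each coordinate i, vecMul v₀ k i = 0 a.e.
  have hzero : ∀ i : Fin p, ∀ᵐ k : K ∂μK, (v₀ ᵥ* (k : Matrix (Fin p) (Fin p) ℝ)) i = 0 := by
    intro i
    set c : K → ℝ := fun k => (v₀ ᵥ* (k : Matrix (Fin p) (Fin p) ℝ)) i with hcdef
    have hc : Continuous c := by
      simp only [hcdef, Matrix.vecMul, dotProduct]
      exact continuous_finset_sum _ fun j _ => continuous_const.mul
        ((continuous_apply i).comp ((continuous_apply j).comp continuous_subtype_val))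
    have hdot : ∀ (s : ℝ) (k : K),
        v₀ ⬝ᵥ (k : Matrix (Fin p) (Fin p) ℝ).mulVec (s • (Pi.single i 1 : Fin p → ℝ)) = s * c k := by
      intro s k
      rw [Matrix.mulVec_smul, dotProduct_smul, smul_eq_mul, Matrix.dotProduct_mulVec,
        dotProduct_single, mul_one]
    have hh : ∀ s : ℝ, (∫ k : K, Complex.exp (Complex.I * (r : ℂ) * ((s * c k : ℝ) : ℂ)) ∂μK)
        = ∫ k : K, Complex.exp (Complex.I * (r' : ℂ) * ((s * c k : ℝ) : ℂ)) ∂μK := by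
      intro s
      have := h (s • (Pi.single i 1 : Fin p → ℝ))
      simp only [hdot] at this
      exact this
    have hint : ∀ τ : ℝ, Integrable (fun k : K => Real.exp (-(τ * c k) ^ 2 / 2)) μK := by
      intro τ
      refine (integrable_const (1:ℝ)).mono'
        ((Real.continuous_exp.comp (by fun_prop)).aestronglyMeasurable) ?_
      refine Filter.Eventually.of_forall fun k => ?_
      rw [Real.norm_eq_abs, Real.abs_exp]
      exact Real.exp_le_one_iff.mpr (by nlinarith [sq_nonneg (τ * c k)])
    have hkey := gauss_key μK c hc r r' hh
    have hfnn : 0 ≤ fun k : K =>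
        Real.exp (-(r * c k) ^ 2 / 2) - Real.exp (-(r' * c k) ^ 2 / 2) := by
      intro k
      simp only [Pi.zero_apply, sub_nonneg]
      apply Real.exp_le_exp.mpr
      have : (r * c k) ^ 2 ≤ (r' * c k) ^ 2 := by
        rw [mul_pow, mul_pow]
        exact mul_le_mul_of_nonneg_right (pow_le_pow_left₀ hr hlt.le 2) (sq_nonneg _)
      linarith
    have hzero' : (∫ k : K,
        (Real.exp (-(r * c k) ^ 2 / 2) - Real.exp (-(r' * c k) ^ 2 / 2)) ∂μK) = 0 := by
      rw [integral_sub (hint r) (hint r'), hkey, sub_self]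
    have hae := (integral_eq_zero_iff_of_nonneg hfnn ((hint r).sub (hint r'))).mp hzero'
    filter_upwards [hae] with k hk
    simp only [Pi.zero_apply, sub_eq_zero] at hk
    have hexp : -(r * c k) ^ 2 / 2 = -(r' * c k) ^ 2 / 2 := Real.exp_eq_exp.mp (hk ▸ rfl)
    have h2 : (r * c k) ^ 2 = (r' * c k) ^ 2 := by linarith
    rw [mul_pow, mul_pow] at h2
    have hrr : r ^ 2 < r' ^ 2 := by nlinarith
    have hck2 : c k ^ 2 = 0 := by nlinarith
    exact (pow_eq_zero_iff two_ne_zero).mp hck2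
  have hall : ∀ᵐ k : K ∂μK, ∀ i : Fin p, (v₀ ᵥ* (k : Matrix (Fin p) (Fin p) ℝ)) i = 0 :=
    (MeasureTheory.ae_all_iff).mpr hzero
  have hne : (MeasureTheory.ae μK).NeBot :=
    MeasureTheory.ae_neBot.mpr (IsProbabilityMeasure.ne_zero μK)
  obtain ⟨k, hk⟩ := hall.exists
  have hw : v₀ ᵥ* (k : Matrix (Fin p) (Fin p) ℝ) = 0 := funext hk
  -- orthogonality: the row vector has norm 1
  have hkk : (k : Matrix (Fin p) (Fin p) ℝ) * (k : Matrix (Fin p) (Fin p) ℝ)ᵀ = 1 := by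
    have := k.2.2
    rwa [Matrix.star_eq_conjTranspose, Matrix.conjTranspose_eq_transpose_of_trivial] at this
  have hnorm : (v₀ ᵥ* (k : Matrix (Fin p) (Fin p) ℝ)) ⬝ᵥ
      (v₀ ᵥ* (k : Matrix (Fin p) (Fin p) ℝ)) = 1 := by
    calc (v₀ ᵥ* (k : Matrix (Fin p) (Fin p) ℝ)) ⬝ᵥ (v₀ ᵥ* (k : Matrix (Fin p) (Fin p) ℝ))
        = (v₀ ᵥ* (k : Matrix (Fin p) (Fin p) ℝ)) ⬝ᵥ
            ((k : Matrix (Fin p) (Fin p) ℝ)ᵀ.mulVec v₀) := by rw [Matrix.mulVec_transpose]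
      _ = ((v₀ ᵥ* (k : Matrix (Fin p) (Fin p) ℝ)) ᵥ* (k : Matrix (Fin p) (Fin p) ℝ)ᵀ) ⬝ᵥ v₀ := by
          rw [Matrix.dotProduct_mulVec]
      _ = (v₀ ᵥ* ((k : Matrix (Fin p) (Fin p) ℝ) * (k : Matrix (Fin p) (Fin p) ℝ)ᵀ)) ⬝ᵥ v₀ := by
          rw [Matrix.vecMul_vecMul]
      _ = v₀ ⬝ᵥ v₀ := by rw [hkk, Matrix.vecMul_one]
      _ = 1 := hv₀
  rw [hw, zero_dotProduct] at hnorm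
  exact zero_ne_one hnorm

/-- the parametrization `r ↦ φ_r` of the 'type 2' bounded
`O(p)`-spherical functions `φ_r(X) = ∫_{O(p)} exp(i·r·⟪v₀, k·X⟫) dk` by `r ∈ [0,∞)`
is injective. -/
theorem type2_spherical_parametrization_injective
    (p : ℕ) (hp : 1 ≤ p) (v₀ : Fin p → ℝ) (hv₀ : v₀ ⬝ᵥ v₀ = 1)
    (μK : Measure (Matrix.orthogonalGroup (Fin p) ℝ))
    [μK.IsHaarMeasure] [IsProbabilityMeasure μK]
    (r r' : ℝ) (hr : 0 ≤ r) (hr' : 0 ≤ r')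
    (h : ∀ X : Fin p → ℝ,
      (∫ k : Matrix.orthogonalGroup (Fin p) ℝ,
        Complex.exp (Complex.I * (r : ℂ) *
          ((v₀ ⬝ᵥ (k : Matrix (Fin p) (Fin p) ℝ).mulVec X : ℝ) : ℂ)) ∂μK) =
      (∫ k : Matrix.orthogonalGroup (Fin p) ℝ,
        Complex.exp (Complex.I * (r' : ℂ) *
          ((v₀ ⬝ᵥ (k : Matrix (Fin p) (Fin p) ℝ).mulVec X : ℝ) : ℂ)) ∂μK)) :
    r = r' := by
  rcases lt_trichotomy r r' with hlt | heq | hlt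
  · exact absurd (aux_contra p v₀ hv₀ μK r r' hr hlt h) not_false
  · exact heq
  · exact absurd (aux_contra p v₀ hv₀ μK r' r hr' hlt (fun X => (h X).symm)) not_false
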